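/- Let k be a field, A = k[a_1,a_2,a_3], p ≥ 2, I = (a_1^p, a_2^p, a_1 a_2^{p-1} + a_3^p), and J = (a_3). Then I^n ∩ J ⊆ I^{n-2}·J for all n ≥ 2, while I^2 ∩ J ⊄ I·J; that is, the weak Artin-Rees number w(J,A;I) equals 2. -/

import Mathlib

/-- The strong Artin-Rees number `s(J,A;I)`: the least `s ≥ 1` with
`I^n ∩ J = I·(I^{n-1} ∩ J)` for all `n ≥ s+1`. -/
noncomputable def strongAR {A : Type*} [CommRing A] (I J : Ideal A) : ℕ :=
  sInf {s : ℕ | 1 ≤ s ∧ ∀ n, s + 1 ≤ n → I ^ n ⊓ J = I * (I ^ (n - 1) ⊓ J)}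

/-- The medium Artin-Rees number `m(J,A;I) = 1 + card{n ≥ 2 : E(J,A;I)_n ≠ 0}`. -/
noncomputable def mediumAR {A : Type*} [CommRing A] (I J : Ideal A) : ℕ :=
  1 + {n : ℕ | 2 ≤ n ∧ I ^ n ⊓ J ≠ I * (I ^ (n - 1) ⊓ J)}.ncard

/-- The weak Artin-Rees number `w(J,A;I)`: the least `s ≥ 1` with
`I^n ∩ J ⊆ I^{n-s}·J` for all `n ≥ s`. -/
noncomputable def weakAR {A : Type*} [CommRing A] (I J : Ideal A) : ℕ :=
  sInf {s : ℕ | 1 ≤ s ∧ ∀ n, s ≤ n → I ^ n ⊓ J ≤ I ^ (n - s) * J}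



open Polynomial

namespace AR16

lemma ipow_split {R : Type*} [CommSemiring R] (K : Ideal R) {a b c : ℕ} (h : a = b + c) :
    K ^ a = K ^ b * K ^ c := by rw [h, pow_add]

lemma epow_split {R : Type*} [CommSemiring R] (x : R) {a b c : ℕ} (h : a = b + c) :
    x ^ a = x ^ b * x ^ c := by rw [h, pow_add]

variable {k : Type*} [Field k]

/-- the ideal (x^p, y^p) in k[x,y] (x = X 1, y = X 0 by our variable convention) -/
noncomputable def KK (k : Type*) [Field k] (p : ℕ) : Ideal (MvPolynomial (Fin 2) k) :=
  Ideal.span {MvPolynomial.X 1 ^ p, MvPolynomial.X 0 ^ p}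

/-- q = x * y^(p-1) -/
noncomputable def qq (k : Type*) [Field k] (p : ℕ) : MvPolynomial (Fin 2) k :=
  MvPolynomial.X 1 * MvPolynomial.X 0 ^ (p - 1)

lemma x_mem_KK (p : ℕ) : (MvPolynomial.X 1 : MvPolynomial (Fin 2) k) ^ p ∈ KK k p :=
  Ideal.subset_span (Set.mem_insert _ _)

lemma y_mem_KK (p : ℕ) : (MvPolynomial.X 0 : MvPolynomial (Fin 2) k) ^ p ∈ KK k p :=
  Ideal.subset_span (Set.mem_insert_of_mem _ rfl)

lemma qq_pow_mem (p : ℕ) (hp : 2 ≤ p) : ∀ i : ℕ, 1 ≤ i → qq k p ^ i ∈ KK k p ^ (i - 1) := by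
  intro i
  induction i using Nat.strong_induction_on with
  | _ i ih =>
    intro hi
    by_cases hip : i ≤ p
    · have hpe : p * (i - 1) ≤ (p - 1) * i := by
        rcases Nat.exists_eq_add_of_le hi with ⟨j, rfl⟩
        have h1 : p * (1 + j - 1) = p * j := by congr 1; omega
        have h2 : (p - 1) * (1 + j) = (p - 1) + (p - 1) * j := by ring
        have h3 : p * j = j + (p - 1) * j := by
          cases p with
          | zero => omega
          | succ p' => rw [Nat.succ_sub_one, Nat.succ_mul]; omega
        have h4 : j ≤ p - 1 := by omega
        rw [h1, h2, h3]
        omega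
      have hxp : (MvPolynomial.X 0 : MvPolynomial (Fin 2) k) ^ ((p - 1) * i)
          = MvPolynomial.X 0 ^ (p * (i - 1)) *
            MvPolynomial.X 0 ^ ((p - 1) * i - p * (i - 1)) :=
        epow_split _ (by omega)
      have hq : qq k p ^ i = (MvPolynomial.X 0 ^ p) ^ (i - 1) *
          (MvPolynomial.X 1 ^ i * MvPolynomial.X 0 ^ ((p - 1) * i - p * (i - 1))) := by
        rw [qq, mul_pow, ← pow_mul, hxp, ← pow_mul]; ring
      rw [hq]
      exact Ideal.mul_mem_right _ _ (Ideal.pow_mem_pow (y_mem_KK p) _)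
    · push_neg at hip
      have hq : qq k p ^ i = qq k p ^ p * qq k p ^ (i - p) := epow_split _ (by omega)
      have h1 : qq k p ^ p ∈ KK k p ^ p := by
        have hqp : qq k p ^ p = (MvPolynomial.X 1 ^ p) *
            ((MvPolynomial.X 0 ^ p) ^ (p - 1)) := by
          rw [qq, mul_pow, ← pow_mul, ← pow_mul, mul_comm (p-1) p]
        have hKp : KK k p ^ p = KK k p ^ 1 * KK k p ^ (p - 1) := ipow_split _ (by omega)
        rw [hqp, hKp]
        exact Ideal.mul_mem_mul (by simpa using x_mem_KK (k := k) p)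
          (Ideal.pow_mem_pow (y_mem_KK p) _)
      have h2 : qq k p ^ (i - p) ∈ KK k p ^ (i - p - 1) := ih (i - p) (by omega) (by omega)
      rw [hq]
      have h3 := Ideal.mul_mem_mul h1 h2
      rw [← pow_add] at h3
      have he : p + (i - p - 1) = i - 1 := by omega
      rwa [he] at h3

/-- KEY descending-induction lemma -/
lemma key (p : ℕ) (hp : 2 ≤ p) (n : ℕ) (H : Polynomial (MvPolynomial (Fin 2) k))
    (hyp : ∀ c : ℕ, ((X - C (qq k p)) * H).coeff c ∈ KK k p ^ (n - c)) :
    ∀ c : ℕ, H.coeff c ∈ KK k p ^ (n - 2 - c) := by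
  have aux : ∀ d c : ℕ, H.natDegree < c + d →
      ∀ i : ℕ, qq k p ^ i * H.coeff c ∈ KK k p ^ ((n + i) - (2 + c)) := by
    intro d
    induction d with
    | zero =>
      intro c hc i
      rw [coeff_eq_zero_of_natDegree_lt (by omega), mul_zero]
      exact zero_mem _
    | succ d ih =>
      intro c hc i
      by_cases hdeg : H.natDegree < c
      · rw [coeff_eq_zero_of_natDegree_lt hdeg, mul_zero]; exact zero_mem _
      · have hrel : H.coeff c - qq k p * H.coeff (c + 1) ∈ KK k p ^ (n - (c + 1)) := by
          have h := hyp (c + 1)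
          rwa [sub_mul, coeff_sub, coeff_X_mul, coeff_C_mul] at h
        set m := H.coeff c - qq k p * H.coeff (c + 1) with hm
        have hsplit : qq k p ^ i * H.coeff c
            = qq k p ^ (i + 1) * H.coeff (c + 1) + qq k p ^ i * m := by
          rw [hm]; ring
        rw [hsplit]
        apply add_mem
        · have h := ih (c + 1) (by omega) (i + 1)
          have he : (n + (i + 1)) - (2 + (c + 1)) = (n + i) - (2 + c) := by omega
          rwa [he] at h
        · rcases i with _ | i'
          · rw [pow_zero, one_mul]
            exact Ideal.pow_le_pow_right (by omega) hrel
          · have h1 : qq k p ^ (i' + 1) ∈ KK k p ^ i' := by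
              have h := qq_pow_mem (k := k) p hp (i' + 1) (by omega)
              rwa [Nat.add_sub_cancel] at h
            have h2 := Ideal.mul_mem_mul h1 hrel
            rw [← pow_add] at h2
            exact Ideal.pow_le_pow_right (by omega) h2
  intro c
  have h := aux (H.natDegree + 1) c (by omega) 0
  rw [pow_zero, one_mul] at h
  have he : (n + 0) - (2 + c) = n - 2 - c := by omega
  rwa [he] at h



noncomputable def sl (p r : ℕ) (f : Polynomial (MvPolynomial (Fin 2) k)) :
    Polynomial (MvPolynomial (Fin 2) k) :=
  ∑ c ∈ Finset.range (f.natDegree + 1), C (f.coeff (p * c + r)) * X ^ c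

lemma sl_coeff (p : ℕ) (hp : 0 < p) (r : ℕ) (f : Polynomial (MvPolynomial (Fin 2) k))
    (c : ℕ) : (sl p r f).coeff c = f.coeff (p * c + r) := by
  rw [sl, finset_sum_coeff]
  rw [Finset.sum_eq_single c]
  · simp
  · intro b _ hb
    simp [coeff_C_mul, coeff_X_pow, Ne.symm hb]
  · intro hc
    rw [Finset.mem_range, not_lt] at hc
    have h1 : f.natDegree < p * c + r := by
      have : c ≤ p * c := Nat.le_mul_of_pos_left c hp
      omega
    simp [coeff_C_mul, coeff_X_pow, coeff_eq_zero_of_natDegree_lt h1]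

lemma sl_zero (p : ℕ) (hp : 0 < p) (r : ℕ) :
    sl p r (0 : Polynomial (MvPolynomial (Fin 2) k)) = 0 := by
  apply Polynomial.ext; intro c; simp [sl_coeff p hp]

lemma sl_add (p : ℕ) (hp : 0 < p) (r : ℕ) (f g : Polynomial (MvPolynomial (Fin 2) k)) :
    sl p r (f + g) = sl p r f + sl p r g := by
  apply Polynomial.ext; intro c; simp [sl_coeff p hp]

lemma sl_CMul (p : ℕ) (hp : 0 < p) (r : ℕ) (b : MvPolynomial (Fin 2) k)
    (f : Polynomial (MvPolynomial (Fin 2) k)) :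
    sl p r (C b * f) = C b * sl p r f := by
  apply Polynomial.ext; intro c; simp [sl_coeff p hp, coeff_C_mul]

lemma sl_XpMul (p : ℕ) (hp : 0 < p) (r : ℕ) (hr : r < p)
    (f : Polynomial (MvPolynomial (Fin 2) k)) :
    sl p r (X ^ p * f) = X * sl p r f := by
  apply Polynomial.ext; intro c
  rw [sl_coeff p hp, mul_comm (X ^ p) f, coeff_mul_X_pow']
  cases c with
  | zero =>
    rw [if_neg (by omega)]
    simp
  | succ c' =>
    have hpc : p * (c' + 1) = p * c' + p := by ring
    rw [if_pos (by omega)]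
    rw [coeff_X_mul, sl_coeff p hp]
    congr 1
    omega

lemma sl_XMul_succ (p : ℕ) (hp : 0 < p) (r : ℕ) (f : Polynomial (MvPolynomial (Fin 2) k)) :
    sl p (r + 1) (X * f) = sl p r f := by
  apply Polynomial.ext; intro c
  rw [sl_coeff p hp, sl_coeff p hp, show p * c + (r + 1) = (p * c + r) + 1 by ring,
    coeff_X_mul]

lemma sl_XMul_zero (p : ℕ) (hp : 0 < p) (f : Polynomial (MvPolynomial (Fin 2) k)) :
    sl p 0 (X * f) = X * sl p (p - 1) f := by
  apply Polynomial.ext; intro c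
  rw [sl_coeff p hp]
  cases c with
  | zero => simp [mul_coeff_zero]
  | succ c' =>
    have hpc : p * (c' + 1) = p * c' + p := by ring
    rw [coeff_X_mul, sl_coeff p hp, show p * (c' + 1) + 0 = (p * c' + (p - 1)) + 1 by omega]
    rw [coeff_X_mul]


/-! ### the ideal upstairs and the slice condition -/

noncomputable def IR (k : Type*) [Field k] (p : ℕ) :
    Ideal (Polynomial (MvPolynomial (Fin 2) k)) :=
  Ideal.span {C (MvPolynomial.X 1 ^ p), C (MvPolynomial.X 0 ^ p), X ^ p + C (qq k p)}

def Dok (p n : ℕ) (u : Polynomial (MvPolynomial (Fin 2) k)) : Prop :=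
  ∀ c : ℕ, u.coeff c ∈ KK k p ^ (n - c)

def Cond (p n : ℕ) (f : Polynomial (MvPolynomial (Fin 2) k)) : Prop :=
  ∀ r : ℕ, r < p → ∃ u, Dok p n u ∧ sl p r f = u.comp (X + C (qq k p))

lemma comp_sub_add (q : MvPolynomial (Fin 2) k) (u : Polynomial (MvPolynomial (Fin 2) k)) :
    (u.comp (X - C q)).comp (X + C q) = u := by
  rw [comp_assoc]
  have h : (X - C q).comp (X + C q) = (X : Polynomial (MvPolynomial (Fin 2) k)) := by
    simp [sub_comp]
  rw [h, comp_X]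

lemma comp_add_sub (q : MvPolynomial (Fin 2) k) (u : Polynomial (MvPolynomial (Fin 2) k)) :
    (u.comp (X + C q)).comp (X - C q) = u := by
  rw [comp_assoc]
  have h : (X + C q).comp (X - C q) = (X : Polynomial (MvPolynomial (Fin 2) k)) := by
    simp [add_comp]
  rw [h, comp_X]

lemma comp_inj (q : MvPolynomial (Fin 2) k) {u v : Polynomial (MvPolynomial (Fin 2) k)}
    (h : u.comp (X + C q) = v.comp (X + C q)) : u = v := by
  have := congrArg (fun w => w.comp (X - C q)) h
  simpa [comp_add_sub] using this

/-! ### Dok lemmas -/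

lemma Dok_zero (p n : ℕ) : Dok p n (0 : Polynomial (MvPolynomial (Fin 2) k)) := by
  intro c; simp

lemma Dok_weaken (p : ℕ) {m n : ℕ} (h : m ≤ n) {u : Polynomial (MvPolynomial (Fin 2) k)}
    (hu : Dok p n u) : Dok p m u := fun c =>
  Ideal.pow_le_pow_right (by omega) (hu c)

lemma Dok_add (p n : ℕ) {u v : Polynomial (MvPolynomial (Fin 2) k)}
    (hu : Dok p n u) (hv : Dok p n v) : Dok p n (u + v) := fun c => by
  rw [coeff_add]; exact add_mem (hu c) (hv c)

lemma Dok_CMul (p n : ℕ) (b : MvPolynomial (Fin 2) k)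
    {u : Polynomial (MvPolynomial (Fin 2) k)} (hu : Dok p n u) : Dok p n (C b * u) := fun c => by
  rw [coeff_C_mul]; exact Ideal.mul_mem_left _ _ (hu c)

lemma Dok_XMul (p n : ℕ) {u : Polynomial (MvPolynomial (Fin 2) k)} (hu : Dok p n u) :
    Dok p (n + 1) (X * u) := by
  intro c
  cases c with
  | zero => simp [mul_coeff_zero]
  | succ c' =>
    rw [coeff_X_mul]
    have := hu c'
    exact Ideal.pow_le_pow_right (by omega) this

lemma Dok_XsubCqMul (p n : ℕ) {u : Polynomial (MvPolynomial (Fin 2) k)} (hu : Dok p n u) :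
    Dok p n ((X - C (qq k p)) * u) := by
  intro c
  rw [sub_mul, coeff_sub]
  apply sub_mem
  · cases c with
    | zero => simp [mul_coeff_zero]
    | succ c' =>
      rw [coeff_X_mul]
      exact Ideal.pow_le_pow_right (by omega) (hu c')
  · rw [coeff_C_mul]
    exact Ideal.mul_mem_left _ _ (hu c)

lemma Dok_genMul (p n : ℕ) {u : Polynomial (MvPolynomial (Fin 2) k)} (hu : Dok p n u)
    (g : MvPolynomial (Fin 2) k) (hg : g ∈ KK k p) : Dok p (n + 1) (C g * u) := by
  intro c
  rw [coeff_C_mul]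
  have h1 : g * u.coeff c ∈ KK k p ^ 1 * KK k p ^ (n - c) := by
    rw [pow_one]; exact Ideal.mul_mem_mul hg (hu c)
  rw [← pow_add] at h1
  exact Ideal.pow_le_pow_right (by omega) h1

/-! ### Cond lemmas -/

section condlem
variable (p : ℕ) (hp : 2 ≤ p)
include hp

lemma cond_zeroP (n : ℕ) : Cond p n (0 : Polynomial (MvPolynomial (Fin 2) k)) := by
  intro r hr
  exact ⟨0, Dok_zero p n, by rw [sl_zero p (by omega), zero_comp]⟩

lemma cond_add (n : ℕ) {f g : Polynomial (MvPolynomial (Fin 2) k)}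
    (hf : Cond p n f) (hg : Cond p n g) : Cond p n (f + g) := by
  intro r hr
  obtain ⟨u, hu, hue⟩ := hf r hr
  obtain ⟨v, hv, hve⟩ := hg r hr
  exact ⟨u + v, Dok_add p n hu hv, by rw [sl_add p (by omega), hue, hve, add_comp]⟩

lemma cond_CMul (n : ℕ) (b : MvPolynomial (Fin 2) k) {f : Polynomial (MvPolynomial (Fin 2) k)}
    (hf : Cond p n f) : Cond p n (C b * f) := by
  intro r hr
  obtain ⟨u, hu, hue⟩ := hf r hr
  exact ⟨C b * u, Dok_CMul p n b hu, by rw [sl_CMul p (by omega), hue, mul_comp, C_comp]⟩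

lemma cond_XMul (n : ℕ) {f : Polynomial (MvPolynomial (Fin 2) k)}
    (hf : Cond p n f) : Cond p n (X * f) := by
  intro r hr
  cases r with
  | zero =>
    obtain ⟨u, hu, hue⟩ := hf (p - 1) (by omega)
    refine ⟨(X - C (qq k p)) * u, Dok_XsubCqMul p n hu, ?_⟩
    rw [sl_XMul_zero p (by omega), hue, mul_comp, sub_comp, X_comp, C_comp]
    ring
  | succ r' =>
    obtain ⟨u, hu, hue⟩ := hf r' (by omega)
    exact ⟨u, hu, by rw [sl_XMul_succ p (by omega), hue]⟩

lemma cond_mul (n : ℕ) (g : Polynomial (MvPolynomial (Fin 2) k))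
    {f : Polynomial (MvPolynomial (Fin 2) k)} (hf : Cond p n f) : Cond p n (g * f) := by
  induction g using Polynomial.induction_on with
  | C b => exact cond_CMul p hp n b hf
  | add g1 g2 h1 h2 => rw [add_mul]; exact cond_add p hp n h1 h2
  | monomial m b hm =>
    have h : C b * X ^ (m + 1) * f = X * (C b * X ^ m * f) := by ring
    rw [h]
    exact cond_XMul p hp n hm

lemma cond_g1Mul (n : ℕ) {f : Polynomial (MvPolynomial (Fin 2) k)} (hf : Cond p n f) :
    Cond p (n + 1) (C (MvPolynomial.X 1 ^ p) * f) := by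
  intro r hr
  obtain ⟨u, hu, hue⟩ := hf r hr
  exact ⟨C (MvPolynomial.X 1 ^ p) * u, Dok_genMul p n hu _ (x_mem_KK p),
    by rw [sl_CMul p (by omega), hue, mul_comp, C_comp]⟩

lemma cond_g2Mul (n : ℕ) {f : Polynomial (MvPolynomial (Fin 2) k)} (hf : Cond p n f) :
    Cond p (n + 1) (C (MvPolynomial.X 0 ^ p) * f) := by
  intro r hr
  obtain ⟨u, hu, hue⟩ := hf r hr
  exact ⟨C (MvPolynomial.X 0 ^ p) * u, Dok_genMul p n hu _ (y_mem_KK p),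
    by rw [sl_CMul p (by omega), hue, mul_comp, C_comp]⟩

lemma cond_g3Mul (n : ℕ) {f : Polynomial (MvPolynomial (Fin 2) k)} (hf : Cond p n f) :
    Cond p (n + 1) ((X ^ p + C (qq k p)) * f) := by
  intro r hr
  obtain ⟨u, hu, hue⟩ := hf r hr
  refine ⟨X * u, Dok_XMul p n hu, ?_⟩
  rw [add_mul, sl_add p (by omega), sl_XpMul p (by omega) r hr, sl_CMul p (by omega),
    hue, mul_comp, X_comp]
  ring

lemma cond_pow (n : ℕ) : ∀ f ∈ (IR k p) ^ n, Cond p n f := by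
  induction n with
  | zero =>
    intro f _ r hr
    refine ⟨(sl p r f).comp (X - C (qq k p)), ?_, (comp_sub_add _ _).symm⟩
    intro c
    simp [Nat.zero_sub, Ideal.one_eq_top]
  | succ n ih =>
    intro f hf
    rw [Submodule.pow_succ] at hf
    refine Submodule.mul_induction_on hf ?_ ?_
    · intro a ha b hb
      have hca : Cond p n a := ih a ha
      have : ∀ x (hx : x ∈ IR k p), Cond p (n + 1) (a * x) := by
        intro x hx
        refine Submodule.span_induction
          (p := fun x _ => Cond p (n + 1) (a * x)) ?_ ?_ ?_ ?_ hx
        · intro y hy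
          rcases hy with h | h | h
          · rw [h, mul_comm]; exact cond_g1Mul p hp n hca
          · rw [h, mul_comm]; exact cond_g2Mul p hp n hca
          · rw [Set.mem_singleton_iff] at h
            rw [h, mul_comm]; exact cond_g3Mul p hp n hca
        · show Cond p (n + 1) (a * 0)
          rw [mul_zero]; exact cond_zeroP p hp (n + 1)
        · intro y z _ _ hy hz
          show Cond p (n + 1) (a * (y + z))
          rw [mul_add]; exact cond_add p hp (n + 1) hy hz
        · intro a' y _ hy
          show Cond p (n + 1) (a * (a' • y))
          have he : a * (a' • y) = a' * (a * y) := by rw [smul_eq_mul]; ring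
          rw [he]
          exact cond_mul p hp (n + 1) a' hy
      exact this b hb
    · intro x y hx hy
      exact cond_add p hp (n + 1) hx hy

end condlem

/-! ### reconstruction from slices -/

section recon
variable (p : ℕ) (hp : 2 ≤ p)
include hp

omit hp in
lemma expand_comp' (u w : Polynomial (MvPolynomial (Fin 2) k)) :
    Polynomial.expand _ p (u.comp w) = u.comp (Polynomial.expand _ p w) := by
  induction u using Polynomial.induction_on with
  | C b => simp
  | add u1 u2 h1 h2 => rw [add_comp, map_add, h1, h2, add_comp]
  | monomial m b _ =>
    rw [mul_comp, C_comp, pow_comp, X_comp, map_mul, map_pow, mul_comp, C_comp,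
      pow_comp, X_comp]
    simp

lemma recon_eq (h : Polynomial (MvPolynomial (Fin 2) k)) :
    h = ∑ r ∈ Finset.range p, (Polynomial.expand _ p (sl p r h)) * X ^ r := by
  apply Polynomial.ext; intro j
  rw [finset_sum_coeff]
  have hdm := Nat.div_add_mod j p
  have hmlt : j % p < p := Nat.mod_lt _ (by omega)
  rw [Finset.sum_eq_single (j % p)]
  · rw [coeff_mul_X_pow', if_pos (by omega)]
    rw [coeff_expand (by omega : 0 < p)]
    have hd : j - j % p = p * (j / p) := by omega
    rw [if_pos ⟨j / p, by omega⟩, hd, Nat.mul_div_cancel_left _ (by omega : 0 < p),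
      sl_coeff p (by omega)]
    congr 1
    omega
  · intro b hb hbne
    rw [Finset.mem_range] at hb
    rw [coeff_mul_X_pow']
    by_cases hble : b ≤ j
    · rw [if_pos hble, coeff_expand (by omega : 0 < p), if_neg]
      rintro ⟨m, hm⟩
      apply hbne
      have : j = p * m + b := by omega
      rw [this, Nat.mul_add_mod, Nat.mod_eq_of_lt hb]
    · rw [if_neg hble]
  · intro hj
    exact absurd (Finset.mem_range.mpr hmlt) hj

set_option linter.unusedSectionVars false
lemma mapC_KK_le : Ideal.map (Polynomial.C (R := MvPolynomial (Fin 2) k)) (KK k p) ≤ IR k p := by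
  rw [show KK k p = Ideal.span {MvPolynomial.X 1 ^ p, MvPolynomial.X 0 ^ p} from rfl,
    Ideal.map_span, Set.image_insert_eq, Set.image_singleton]
  apply Ideal.span_le.mpr
  intro y hy
  rcases hy with h | h
  · rw [h]; exact Ideal.subset_span (Set.mem_insert _ _)
  · rw [Set.mem_singleton_iff] at h
    rw [h]; exact Ideal.subset_span (Set.mem_insert_of_mem _ (Set.mem_insert _ _))

lemma g3_mem_IR : (X ^ p + C (qq k p)) ∈ IR k p := by
  apply Ideal.subset_span
  simp

lemma comp_mem_IR (n : ℕ) (u : Polynomial (MvPolynomial (Fin 2) k)) (hu : Dok p n u) :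
    u.comp (X ^ p + C (qq k p)) ∈ IR k p ^ n := by
  rw [comp_eq_sum_left, Polynomial.sum_def]
  apply Submodule.sum_mem
  intro e he
  show C (u.coeff e) * (X ^ p + C (qq k p)) ^ e ∈ IR k p ^ n
  have hC : C (u.coeff e) ∈ IR k p ^ (n - e) := by
    have h1 : C (u.coeff e) ∈ Ideal.map (Polynomial.C (R := MvPolynomial (Fin 2) k))
        (KK k p ^ (n - e)) := Ideal.mem_map_of_mem _ (hu e)
    rw [Ideal.map_pow] at h1
    exact Ideal.pow_right_mono (mapC_KK_le p hp) _ h1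
  have hg : (X ^ p + C (qq k p)) ^ e ∈ IR k p ^ e :=
    Ideal.pow_mem_pow (g3_mem_IR p hp) _
  by_cases hen : e ≤ n
  · have h2 := Ideal.mul_mem_mul hC hg
    rw [← Ideal.IsTwoSided.pow_add] at h2
    have hee : n - e + e = n := by omega
    rwa [hee] at h2
  · have h2 : C (u.coeff e) * (X ^ p + C (qq k p)) ^ e ∈ IR k p ^ e :=
      Ideal.mul_mem_left _ _ hg
    exact Ideal.pow_le_pow_right (by omega) h2


lemma cond_to_mem (n : ℕ) (h : Polynomial (MvPolynomial (Fin 2) k))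
    (hc : Cond p n h) : h ∈ IR k p ^ n := by
  rw [recon_eq p hp h]
  apply Submodule.sum_mem
  intro r hr
  rw [Finset.mem_range] at hr
  obtain ⟨u, hu, hue⟩ := hc r hr
  rw [hue, expand_comp' p]
  have hX : Polynomial.expand (MvPolynomial (Fin 2) k) p (X + C (qq k p))
      = X ^ p + C (qq k p) := by
    rw [map_add, Polynomial.expand_X, Polynomial.expand_C]
  rw [hX]
  exact Ideal.mul_mem_right _ _ (comp_mem_IR p hp n u hu)

/-- Main statement upstairs -/
lemma R_main (n : ℕ) (hn : 2 ≤ n) :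
    (IR k p) ^ n ⊓ Ideal.span {(X : Polynomial (MvPolynomial (Fin 2) k))} ≤
      (IR k p) ^ (n - 2) * Ideal.span {X} := by
  rintro f ⟨hfI, hfX⟩
  obtain ⟨h, hh⟩ := Ideal.mem_span_singleton'.mp hfX
  have hcf : Cond p n (X * h) := by
    have := cond_pow p hp n f hfI
    rwa [← hh, mul_comm h X] at this
  have hch : Cond p (n - 2) h := by
    intro r hr
    by_cases hr' : r + 1 < p
    · obtain ⟨u, hu, hue⟩ := hcf (r + 1) hr'
      rw [sl_XMul_succ p (by omega)] at hue
      exact ⟨u, Dok_weaken p (by omega) hu, hue⟩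
    · have hrp : r = p - 1 := by omega
      obtain ⟨U, hU, hUe⟩ := hcf 0 (by omega)
      rw [sl_XMul_zero p (by omega)] at hUe
      set W := (sl p (p - 1) h).comp (X - C (qq k p)) with hW
      have hWc : W.comp (X + C (qq k p)) = sl p (p - 1) h := comp_sub_add _ _
      have hUW : U = (X - C (qq k p)) * W := by
        apply comp_inj (qq k p)
        rw [mul_comp, sub_comp, X_comp, C_comp, hWc, ← hUe]
        ring
      have hkey : ∀ c : ℕ, W.coeff c ∈ KK k p ^ (n - 2 - c) := by
        apply key p hp n W
        intro c
        rw [← hUW]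
        exact hU c
      refine ⟨W, ?_, by rw [hrp, hWc]⟩
      intro c
      exact hkey c
  have hmem : h ∈ IR k p ^ (n - 2) := cond_to_mem p hp (n - 2) h hch
  rw [← hh]
  exact Ideal.mul_mem_mul hmem (Ideal.subset_span rfl)

end recon

/-! ### transfer to three variables -/

noncomputable def EE (k : Type*) [Field k] :
    MvPolynomial (Fin 3) k ≃ₐ[k] Polynomial (MvPolynomial (Fin 2) k) :=
  (MvPolynomial.renameEquiv k (Equiv.swap (0 : Fin 3) 2)).trans (MvPolynomial.finSuccEquiv k 2)

lemma EE_X0 : EE k (MvPolynomial.X 0) = C (MvPolynomial.X 1) := by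
  rw [EE, AlgEquiv.trans_apply, MvPolynomial.renameEquiv_apply, MvPolynomial.rename_X,
    Equiv.swap_apply_left, show (2 : Fin 3) = Fin.succ 1 from rfl,
    MvPolynomial.finSuccEquiv_X_succ]

lemma EE_X1 : EE k (MvPolynomial.X 1) = C (MvPolynomial.X 0) := by
  rw [EE, AlgEquiv.trans_apply, MvPolynomial.renameEquiv_apply, MvPolynomial.rename_X,
    Equiv.swap_apply_of_ne_of_ne (by decide) (by decide),
    show (1 : Fin 3) = Fin.succ 0 from rfl, MvPolynomial.finSuccEquiv_X_succ]

lemma EE_X2 : EE k (MvPolynomial.X 2) = X := by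
  rw [EE, AlgEquiv.trans_apply, MvPolynomial.renameEquiv_apply, MvPolynomial.rename_X,
    Equiv.swap_apply_right, MvPolynomial.finSuccEquiv_X_zero]

section transA
variable (p : ℕ) (hp : 2 ≤ p)

noncomputable def IA (k : Type*) [Field k] (p : ℕ) : Ideal (MvPolynomial (Fin 3) k) :=
  Ideal.span {MvPolynomial.X 0 ^ p, MvPolynomial.X 1 ^ p,
    MvPolynomial.X 0 * MvPolynomial.X 1 ^ (p - 1) + MvPolynomial.X 2 ^ p}

noncomputable def JA (k : Type*) [Field k] : Ideal (MvPolynomial (Fin 3) k) :=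
  Ideal.span {MvPolynomial.X 2}

lemma map_EE_I : Ideal.map (EE k) (IA k p) = IR k p := by
  rw [show IA k p = Ideal.span {MvPolynomial.X 0 ^ p, MvPolynomial.X 1 ^ p,
    MvPolynomial.X 0 * MvPolynomial.X 1 ^ (p - 1) + MvPolynomial.X 2 ^ p} from rfl,
    Ideal.map_span, Set.image_insert_eq, Set.image_insert_eq, Set.image_singleton]
  have h1 : EE k (MvPolynomial.X 0 ^ p) = C (MvPolynomial.X 1 ^ p) := by
    rw [map_pow, EE_X0, ← Polynomial.C_pow]
  have h2 : EE k (MvPolynomial.X 1 ^ p) = C (MvPolynomial.X 0 ^ p) := by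
    rw [map_pow, EE_X1, ← Polynomial.C_pow]
  have h3 : EE k (MvPolynomial.X 0 * MvPolynomial.X 1 ^ (p - 1) + MvPolynomial.X 2 ^ p)
      = X ^ p + C (qq k p) := by
    rw [map_add, map_mul, map_pow, map_pow, EE_X0, EE_X1, EE_X2]
    rw [show qq k p = MvPolynomial.X 1 * MvPolynomial.X 0 ^ (p - 1) from rfl]
    rw [← Polynomial.C_pow, ← Polynomial.C_mul]
    ring
  rw [h1, h2, h3]
  rfl

lemma map_EE_J : Ideal.map (EE k) (JA k) = Ideal.span {(X : Polynomial (MvPolynomial (Fin 2) k))} := by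
  rw [show JA k = Ideal.span {MvPolynomial.X 2} from rfl, Ideal.map_span,
    Set.image_singleton, EE_X2]

include hp in
lemma A_main (n : ℕ) (hn : 2 ≤ n) :
    (IA k p) ^ n ⊓ JA k ≤ (IA k p) ^ (n - 2) * JA k := by
  intro f hf
  have h1 : EE k f ∈ (IR k p) ^ n ⊓ Ideal.span {X} := by
    constructor
    · have := Ideal.mem_map_of_mem (EE k) hf.1
      rwa [Ideal.map_pow, map_EE_I] at this
    · have := Ideal.mem_map_of_mem (EE k) hf.2
      rwa [map_EE_J] at this
  have h2 := R_main p hp n hn h1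
  have h3 : EE k f ∈ Ideal.map (EE k) ((IA k p) ^ (n - 2) * JA k) := by
    rwa [Ideal.map_mul, Ideal.map_pow, map_EE_I, map_EE_J]
  have h4 : f ∈ Ideal.comap (EE k) (Ideal.map (EE k) ((IA k p) ^ (n - 2) * JA k)) := h3
  rwa [Ideal.comap_map_of_bijective _ (EE k).bijective] at h4

end transA

/-! ### Part 2 : the witness -/

section part2
variable (p : ℕ) (hp : 2 ≤ p)

noncomputable def wA (k : Type*) [Field k] (p : ℕ) : MvPolynomial (Fin 3) k :=
  MvPolynomial.X 0 ^ (p - 2) *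
      (MvPolynomial.X 0 * MvPolynomial.X 1 ^ (p - 1) + MvPolynomial.X 2 ^ p) ^ 2 -
    MvPolynomial.X 1 ^ (p - 2) * (MvPolynomial.X 0 ^ p * MvPolynomial.X 1 ^ p)

lemma wA_mem_I2 : wA k p ∈ (IA k p) ^ 2 := by
  have hg1 : (MvPolynomial.X 0 : MvPolynomial (Fin 3) k) ^ p ∈ IA k p :=
    Ideal.subset_span (Set.mem_insert _ _)
  have hg2 : (MvPolynomial.X 1 : MvPolynomial (Fin 3) k) ^ p ∈ IA k p :=
    Ideal.subset_span (Set.mem_insert_of_mem _ (Set.mem_insert _ _))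
  have hg3 : (MvPolynomial.X 0 * MvPolynomial.X 1 ^ (p - 1) + MvPolynomial.X 2 ^ p :
      MvPolynomial (Fin 3) k) ∈ IA k p :=
    Ideal.subset_span (Set.mem_insert_of_mem _ (Set.mem_insert_of_mem _ rfl))
  rw [wA]
  apply sub_mem
  · apply Ideal.mul_mem_left
    rw [pow_two, pow_two]
    exact Ideal.mul_mem_mul hg3 hg3
  · apply Ideal.mul_mem_left
    rw [pow_two]
    exact Ideal.mul_mem_mul hg1 hg2

include hp in
lemma wA_mem_J : wA k p ∈ JA k := by
  rw [show JA k = Ideal.span {(MvPolynomial.X 2 : MvPolynomial (Fin 3) k)} from rfl,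
    Ideal.mem_span_singleton']
  obtain ⟨m, rfl⟩ : ∃ m, p = m + 2 := ⟨p - 2, by omega⟩
  refine ⟨2 * MvPolynomial.X 0 ^ (m + 1) * MvPolynomial.X 1 ^ (m + 1) *
      MvPolynomial.X 2 ^ (m + 1) + MvPolynomial.X 0 ^ m * MvPolynomial.X 2 ^ (2 * m + 3), ?_⟩
  rw [wA, show m + 2 - 1 = m + 1 from by omega, show m + 2 - 2 = m from by omega]
  ring

end part2

/-! ### Part 2 : non-membership -/

section part2b
variable (p : ℕ) (hp : 2 ≤ p)
include hp

lemma notmem_KK :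
    (MvPolynomial.X 0 : MvPolynomial (Fin 2) k) ^ (p - 1) * MvPolynomial.X 1 ^ (p - 1) ∉
      KK k p := by
  classical
  intro hmem
  have hset : ({MvPolynomial.X 1 ^ p, MvPolynomial.X 0 ^ p} :
      Set (MvPolynomial (Fin 2) k)) =
      (fun s => MvPolynomial.monomial s (1 : k)) ''
        {Finsupp.single 1 p, Finsupp.single 0 p} := by
    rw [Set.image_insert_eq, Set.image_singleton, MvPolynomial.X_pow_eq_monomial,
      MvPolynomial.X_pow_eq_monomial]
  rw [show KK k p = Ideal.span {MvPolynomial.X 1 ^ p, MvPolynomial.X 0 ^ p} from rfl,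
    hset, MvPolynomial.mem_ideal_span_monomial_image] at hmem
  have hx : (MvPolynomial.X 0 : MvPolynomial (Fin 2) k) ^ (p - 1) * MvPolynomial.X 1 ^ (p - 1)
      = MvPolynomial.monomial (Finsupp.single 0 (p - 1) + Finsupp.single 1 (p - 1)) (1 : k) := by
    rw [MvPolynomial.X_pow_eq_monomial, MvPolynomial.X_pow_eq_monomial,
      MvPolynomial.monomial_mul, one_mul]
  rw [hx] at hmem
  have hsupmem : (Finsupp.single (0 : Fin 2) (p - 1) + Finsupp.single 1 (p - 1)) ∈
      (MvPolynomial.monomial (Finsupp.single 0 (p - 1) + Finsupp.single 1 (p - 1))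
        (1 : k)).support := by
    rw [MvPolynomial.support_monomial, if_neg one_ne_zero]
    exact Finset.mem_singleton_self _
  obtain ⟨si, hsi, hle⟩ := hmem _ hsupmem
  rcases hsi with h | h
  · subst h
    have h1 := Finsupp.le_def.mp hle 1
    simp [Finsupp.single_apply] at h1
    omega
  · rw [Set.mem_singleton_iff] at h
    subst h
    have h1 := Finsupp.le_def.mp hle 0
    simp [Finsupp.single_apply] at h1
    omega

lemma wA_notmem_IJ : wA k p ∉ IA k p * JA k := by
  intro hw
  set R0 := MvPolynomial (Fin 2) k ⧸ KK k p with hR0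
  letI : CommRing R0 := inferInstanceAs (CommRing (MvPolynomial (Fin 2) k ⧸ KK k p))
  set sb : R0 := Ideal.Quotient.mk (KK k p) (MvPolynomial.X 0) with hsb
  set tb : R0 := Ideal.Quotient.mk (KK k p) (MvPolynomial.X 1) with htb
  set φ : MvPolynomial (Fin 3) k →ₐ[k] Polynomial R0 :=
    MvPolynomial.aeval ![C sb, C tb, X] with hφ
  have hφ0 : φ (MvPolynomial.X 0) = C sb := by simp [hφ]
  have hφ1 : φ (MvPolynomial.X 1) = C tb := by simp [hφ]
  have hφ2 : φ (MvPolynomial.X 2) = X := by simp [hφ]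
  have hsp : sb ^ p = 0 := by
    rw [hsb, ← map_pow, Ideal.Quotient.eq_zero_iff_mem]
    exact y_mem_KK p
  have htp : tb ^ p = 0 := by
    rw [htb, ← map_pow, Ideal.Quotient.eq_zero_iff_mem]
    exact x_mem_KK p
  set G : Polynomial R0 := X ^ p + C (sb * tb ^ (p - 1)) with hG
  have hφg3 : φ (MvPolynomial.X 0 * MvPolynomial.X 1 ^ (p - 1) + MvPolynomial.X 2 ^ p) = G := by
    rw [map_add, map_mul, map_pow, map_pow, hφ0, hφ1, hφ2, hG, ← Polynomial.C_pow,
      ← Polynomial.C_mul]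
    ring
  have hmapI : Ideal.map φ (IA k p) ≤ Ideal.span {G} := by
    rw [show IA k p = Ideal.span {MvPolynomial.X 0 ^ p, MvPolynomial.X 1 ^ p,
      MvPolynomial.X 0 * MvPolynomial.X 1 ^ (p - 1) + MvPolynomial.X 2 ^ p} from rfl,
      Ideal.map_span, Set.image_insert_eq, Set.image_insert_eq, Set.image_singleton]
    apply Ideal.span_le.mpr
    intro y hy
    rcases hy with h | h | h
    · rw [h, map_pow, hφ0, ← Polynomial.C_pow, hsp, map_zero]
      exact zero_mem _
    · rw [h, map_pow, hφ1, ← Polynomial.C_pow, htp, map_zero]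
      exact zero_mem _
    · rw [Set.mem_singleton_iff] at h
      rw [h, hφg3]
      exact Ideal.subset_span rfl
  have hmapJ : Ideal.map φ (JA k) ≤ Ideal.span {(X : Polynomial R0)} := by
    rw [show JA k = Ideal.span {(MvPolynomial.X 2 : MvPolynomial (Fin 3) k)} from rfl,
      Ideal.map_span, Set.image_singleton, hφ2]
  have hφw : φ (wA k p) = C (sb ^ (p - 2)) * G ^ 2 := by
    rw [wA, map_sub, map_mul, map_mul, map_pow, map_pow, map_mul, map_pow, map_pow,
      hφ0, hφ1, hφg3, ← Polynomial.C_pow, ← Polynomial.C_pow, ← Polynomial.C_pow, hsp]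
    simp
  have h1 : φ (wA k p) ∈ Ideal.span {G} * Ideal.span {(X : Polynomial R0)} := by
    have hmm := Ideal.mem_map_of_mem φ hw
    rw [Ideal.map_mul φ (IA k p) (JA k)] at hmm
    exact Ideal.mul_mono hmapI hmapJ hmm
  rw [Ideal.span_singleton_mul_span_singleton, Ideal.mem_span_singleton', hφw] at h1
  obtain ⟨c, hc⟩ := h1
  have hGm : G.Monic := by
    rw [hG]
    apply Polynomial.monic_X_pow_add
    calc (C (sb * tb ^ (p - 1))).degree ≤ 0 := Polynomial.degree_C_le
    _ < (p : WithBot ℕ) := by exact_mod_cast (by omega : 0 < p)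
  have hzero : G * (c * X - C (sb ^ (p - 2)) * G) = 0 := by
    linear_combination hc
  have hcancel : c * X - C (sb ^ (p - 2)) * G = 0 := (hGm.mul_right_eq_zero_iff).mp hzero
  have heq : C (sb ^ (p - 2)) * G = c * X := by linear_combination -hcancel
  have hL : (C (sb ^ (p - 2)) * G).coeff 0 = sb ^ (p - 2) * (sb * tb ^ (p - 1)) := by
    rw [coeff_C_mul, hG, coeff_add, coeff_X_pow, if_neg (by omega), coeff_C_zero]
    simp
  have hR : ((c : Polynomial R0) * X).coeff 0 = 0 := by
    rw [mul_coeff_zero, coeff_X_zero, mul_zero]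
  have hc0 : sb ^ (p - 2) * (sb * tb ^ (p - 1)) = 0 := by
    rw [← hL, heq, hR]
  have hfin : sb ^ (p - 1) * tb ^ (p - 1) = 0 := by
    rw [epow_split sb (show p - 1 = (p - 2) + 1 from by omega), pow_one]
    linear_combination hc0
  refine notmem_KK (k := k) p hp ?_
  rw [← Ideal.Quotient.eq_zero_iff_mem, map_mul, map_pow, map_pow]
  exact hfin

end part2b


end AR16

/-- For `A = k[a₁,a₂,a₃]`, `p ≥ 2`, `I = (a₁^p, a₂^p, a₁a₂^{p-1} + a₃^p)`
and `J = (a₃)`: `Iⁿ ∩ J ⊆ I^{n-2}·J` for all `n ≥ 2`, while `I² ∩ J ⊄ I·J`; that is,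
the weak Artin-Rees number `w(J,A;I)` equals `2`. -/
theorem stmt_16 {k : Type*} [Field k] (p : ℕ) (hp : 2 ≤ p) :
    let a₁ : MvPolynomial (Fin 3) k := MvPolynomial.X 0
    let a₂ : MvPolynomial (Fin 3) k := MvPolynomial.X 1
    let a₃ : MvPolynomial (Fin 3) k := MvPolynomial.X 2
    let I : Ideal (MvPolynomial (Fin 3) k) :=
      Ideal.span {a₁ ^ p, a₂ ^ p, a₁ * a₂ ^ (p - 1) + a₃ ^ p}
    let J : Ideal (MvPolynomial (Fin 3) k) := Ideal.span {a₃}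
    (∀ n, 2 ≤ n → I ^ n ⊓ J ≤ I ^ (n - 2) * J) ∧
    ¬ (I ^ 2 ⊓ J ≤ I * J) ∧
    weakAR I J = 2 := by
  intro a₁ a₂ a₃ I J
  have hI : I = AR16.IA k p := rfl
  have hJ : J = AR16.JA k := rfl
  have part1 : ∀ n, 2 ≤ n → I ^ n ⊓ J ≤ I ^ (n - 2) * J := by
    intro n hn
    rw [hI, hJ]
    exact AR16.A_main p hp n hn
  have part2 : ¬ (I ^ 2 ⊓ J ≤ I * J) := by
    intro hle
    have hw : AR16.wA k p ∈ I ^ 2 ⊓ J := by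
      rw [hI, hJ]
      exact ⟨AR16.wA_mem_I2 p, AR16.wA_mem_J p hp⟩
    have hw2 := hle hw
    rw [hI, hJ] at hw2
    exact AR16.wA_notmem_IJ p hp hw2
  refine ⟨part1, part2, ?_⟩
  have h2mem : 2 ∈ {s : ℕ | 1 ≤ s ∧ ∀ n, s ≤ n → I ^ n ⊓ J ≤ I ^ (n - s) * J} :=
    ⟨one_le_two, fun n hn => part1 n hn⟩
  rw [weakAR]
  apply le_antisymm
  · exact Nat.sInf_le h2mem
  · apply le_csInf ⟨2, h2mem⟩
    rintro b ⟨hb1, hb2⟩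
    by_contra hlt
    push_neg at hlt
    have hb : b = 1 := by omega
    subst hb
    have h2 := hb2 2 (by omega)
    norm_num at h2
    exact part2 h2
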